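/- Let a, b ∈ R^m with |a^T b| > λ ||b||_2 for some λ ≥ 0 (which implies ||a||_2 > λ and a ≠ 0, b ≠ 0). Then the unique minimizer of f(x) = ||a x - b||_2 + λ|x| over R is x* = x_ls - sgn(x_ls) · (λ/||a||_2²) · sqrt( (||a||_2² ||b||_2² - (a^T b)²) / (||a||_2² - λ²) ), where x_ls = (a^T b)/||a||_2². -/

import Mathlib

noncomputable def norm2 {m : ℕ} (v : Fin m → ℝ) : ℝ := Real.sqrt (∑ k, v k ^ 2)
noncomputable def dot {m : ℕ} (u v : Fin m → ℝ) : ℝ := ∑ k, u k * v k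


set_option maxHeartbeats 1600000 in
lemma sqrtlasso_core (A B C lam s t xstar x : ℝ) (hlam : 0 ≤ lam) (hA : 0 < A) (hB : 0 < B)
    (hCS : C^2 ≤ A*B) (hC : lam^2 * B < C^2) (hs2 : s^2 = 1) (hsC : s*C = |C|)
    (ht : t = Real.sqrt ((A*B - C^2)/(A - lam^2)))
    (hxs : xstar = C/A - s*(lam/A)*t) :
    Real.sqrt (A*xstar^2 - 2*C*xstar + B) + lam*|xstar|
      ≤ Real.sqrt (A*x^2 - 2*C*x + B) + lam*|x| ∧
    (x ≠ xstar → Real.sqrt (A*xstar^2 - 2*C*xstar + B) + lam*|xstar|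
      < Real.sqrt (A*x^2 - 2*C*x + B) + lam*|x|) := by
  have hD0 : 0 ≤ A*B - C^2 := by linarith
  have hAl : lam^2 < A := by nlinarith
  have ht0 : 0 ≤ t := ht ▸ Real.sqrt_nonneg _
  have ht2 : t^2 * (A - lam^2) = A*B - C^2 := by
    rw [ht, Real.sq_sqrt (div_nonneg hD0 (by linarith))]
    exact div_mul_cancel₀ _ (ne_of_gt (by linarith : (0:ℝ) < A - lam^2))
  have hC0 : 0 < C^2 := lt_of_le_of_lt (by positivity) hC
  -- lam * t < |C|
  have hlt : lam * t < |C| := by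
    have h1 : (lam*t)^2 < C^2 := by
      nlinarith [ht2, mul_lt_mul_of_pos_left hC hA, sq_nonneg (lam*t)]
    nlinarith [sq_abs C, abs_nonneg C, mul_nonneg hlam ht0]
  -- A * xstar - C = -(s*lam*t)
  have hAx : A * xstar - C = -(s*lam*t) := by
    rw [hxs]; field_simp; ring
  -- s * xstar > 0
  have hsx : 0 < s * xstar := by
    have h1 : s * xstar * A = s*C - s^2*(lam*t) := by
      rw [hxs]; field_simp
    rw [hs2, hsC] at h1
    nlinarith [h1, hlt]
  -- |xstar| = s * xstar
  have h12 : (s - 1) * (s + 1) = 0 := by nlinarith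
  have habs : |xstar| = s * xstar := by
    rcases mul_eq_zero.1 h12 with h1 | h1
    · have hs : s = 1 := by linarith
      have hx0 : 0 < xstar := by nlinarith
      rw [hs, one_mul]; exact abs_of_pos hx0
    · have hs : s = -1 := by linarith
      have hx0 : xstar < 0 := by nlinarith
      rw [hs, abs_of_neg hx0]; ring
  -- q(xstar) = t^2
  have hqs : A*xstar^2 - 2*C*xstar + B = t^2 := by
    have h1 : A * (A*xstar^2 - 2*C*xstar + B) = (A*xstar - C)^2 + (A*B - C^2) := by ring
    rw [hAx] at h1
    have h2 : A * (A*xstar^2 - 2*C*xstar + B) = A * t^2 := by nlinarith [ht2, hs2]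
    exact mul_left_cancel₀ (ne_of_gt hA) h2
  have hsqs : Real.sqrt (A*xstar^2 - 2*C*xstar + B) = t := by
    rw [hqs]; exact Real.sqrt_sq ht0
  have hqnn : ∀ y : ℝ, 0 ≤ A*y^2 - 2*C*y + B := by
    intro y; nlinarith [sq_nonneg (A*y - C)]
  have hsabs : s * x ≤ |x| := by
    rcases mul_eq_zero.1 h12 with h1 | h1
    · have hs : s = 1 := by linarith
      rw [hs, one_mul]; exact le_abs_self x
    · have hs : s = -1 := by linarith
      rw [hs]; linarith [neg_abs_le x]
  rcases eq_or_lt_of_le hD0 with hD | hD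
  · -- degenerate case A*B = C^2 : t = 0, xstar = C/A
    have htz : t = 0 := by
      have : t^2 = 0 := by nlinarith
      exact pow_eq_zero_iff (n := 2) (by norm_num) |>.1 this
    set r := Real.sqrt A with hr
    have hr2 : r^2 = A := Real.sq_sqrt hA.le
    have hrpos : 0 < r := Real.sqrt_pos.2 hA
    have hrl : lam < r := by nlinarith
    have hx0 : xstar = C/A := by rw [hxs, htz]; ring
    have hBA : B * A = C^2 := by nlinarith [hD]
    have hqx : ∀ y : ℝ, Real.sqrt (A*y^2 - 2*C*y + B) = r * |y - xstar| := by
      intro y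
      rw [← Real.sqrt_sq_eq_abs, hr, ← Real.sqrt_mul hA.le]
      congr 1
      rw [hx0]
      field_simp
      linear_combination hBA
    have key : ∀ y : ℝ, Real.sqrt (A*xstar^2 - 2*C*xstar + B) + lam*|xstar| + (r - lam)*|y - xstar|
        ≤ Real.sqrt (A*y^2 - 2*C*y + B) + lam*|y| := by
      intro y
      rw [hqx y, hsqs, htz]
      have h1 : |xstar| - |y| ≤ |y - xstar| := by
        have := abs_sub_abs_le_abs_sub xstar y
        rw [abs_sub_comm] at this; linarith
      nlinarith [abs_nonneg (y - xstar), hlam]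
    constructor
    · have := key x; nlinarith [abs_nonneg (x - xstar)]
    · intro hne
      have hax : 0 < |x - xstar| := abs_pos.2 (sub_ne_zero.2 hne)
      have := key x; nlinarith
  · -- nondegenerate case
    have htpos : 0 < t := by
      rcases eq_or_lt_of_le ht0 with h0 | h0
      · exfalso; rw [← h0] at ht2; simp at ht2; linarith
      · exact h0
    set qx := A*x^2 - 2*C*x + B with hqxdef
    have hid : qx * (A*xstar^2 - 2*C*xstar + B)
        = (A*x*xstar - C*x - C*xstar + B)^2 + (A*B - C^2)*(x - xstar)^2 := by
      rw [hqxdef]; ring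
    have hsqx : Real.sqrt qx ^ 2 = qx := Real.sq_sqrt (hqnn x)
    set r := A*x*xstar - C*x - C*xstar + B with hrdef
    have hkey2 : (Real.sqrt qx * t)^2 = r^2 + (A*B - C^2)*(x - xstar)^2 := by
      rw [mul_pow, hsqx]
      nlinarith [hid, hqs]
    have hstn : 0 ≤ Real.sqrt qx * t := mul_nonneg (Real.sqrt_nonneg _) ht0
    -- tangent inequalities
    have htan : r ≤ Real.sqrt qx * t := by
      nlinarith [sq_nonneg (x - xstar), sq_nonneg (Real.sqrt qx * t + r)]
    have hrt : r = t^2 - s*lam*t*(x - xstar) := by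
      have : r - t^2 = (A*xstar - C)*(x - xstar) := by
        rw [hrdef, ← hqs]; ring
      rw [hAx] at this; linarith
    have hmul : lam*t*(s*x) ≤ lam*t*|x| :=
      mul_le_mul_of_nonneg_left hsabs (by positivity)
    constructor
    · rw [hsqs, habs]
      have goal' : t * (t + lam * (s * xstar)) ≤ t * (Real.sqrt qx + lam * |x|) := by
        nlinarith [htan, hmul, hrt]
      exact le_of_mul_le_mul_left goal' htpos
    · intro hne
      have hax : 0 < (x - xstar)^2 := by
        have := sub_ne_zero.2 hne
        positivity
      have htan' : r < Real.sqrt qx * t := by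
        nlinarith [sq_nonneg (Real.sqrt qx * t + r), mul_pos hD hax, hstn]
      rw [hsqs, habs]
      have goal' : t * (t + lam * (s * xstar)) < t * (Real.sqrt qx + lam * |x|) := by
        nlinarith [htan', hmul, hrt]
      exact lt_of_mul_lt_mul_left goal' ht0

theorem univariate_sqrtLASSO_nonzero_solution {m : ℕ} (a b : Fin m → ℝ)
    (lam : ℝ) (hlam : 0 ≤ lam) (h : |dot a b| > lam * norm2 b)
    (xls xstar : ℝ)
    (hxls : xls = dot a b / norm2 a ^ 2)
    (hxstar : xstar = xls - Real.sign xls * (lam / norm2 a ^ 2) *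
        Real.sqrt ((norm2 a ^ 2 * norm2 b ^ 2 - (dot a b) ^ 2) /
          (norm2 a ^ 2 - lam ^ 2))) :
    (∀ x : ℝ, norm2 (xstar • a - b) + lam * |xstar|
        ≤ norm2 (x • a - b) + lam * |x|) ∧
    (∀ x : ℝ, (∀ z : ℝ, norm2 (x • a - b) + lam * |x|
        ≤ norm2 (z • a - b) + lam * |z|) → x = xstar) := by
  set A := norm2 a ^ 2 with hAdef
  set B := norm2 b ^ 2 with hBdef
  set C := dot a b with hCdef
  have hAsum : A = ∑ k, a k ^ 2 := Real.sq_sqrt (by positivity)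
  have hBsum : B = ∑ k, b k ^ 2 := Real.sq_sqrt (by positivity)
  have hAnn : 0 ≤ A := by rw [hAsum]; positivity
  have hBnn : 0 ≤ B := by rw [hBsum]; positivity
  have hCS : C^2 ≤ A * B := by
    rw [hAsum, hBsum, hCdef]
    exact Finset.sum_mul_sq_le_sq_mul_sq _ _ _
  have hbnn : 0 ≤ norm2 b := Real.sqrt_nonneg _
  have hC : lam^2 * B < C^2 := by
    have h1 : (lam * norm2 b)^2 < C^2 := by
      nlinarith [sq_abs C, abs_nonneg C, mul_nonneg hlam hbnn, h]
    nlinarith [h1]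
  have hC0 : 0 < C^2 := lt_of_le_of_lt (by positivity) hC
  have hCne : C ≠ 0 := by intro h0; rw [h0] at hC0; simp at hC0
  have hABpos : 0 < A * B := lt_of_lt_of_le hC0 hCS
  have hA : 0 < A := by
    rcases hAnn.lt_or_eq with h' | h'
    · exact h'
    · exfalso; rw [← h'] at hABpos; simp at hABpos
  have hB : 0 < B := by nlinarith
  -- sign facts
  set s := Real.sign xls with hsdef
  have hsfacts : s^2 = 1 ∧ s * C = |C| := by
    rcases lt_trichotomy C 0 with hc | hc | hc
    · have hxlsneg : xls < 0 := by rw [hxls]; exact div_neg_of_neg_of_pos hc hA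
      have : s = -1 := by rw [hsdef]; exact Real.sign_of_neg hxlsneg
      rw [this]; constructor
      · norm_num
      · rw [abs_of_neg hc]; ring
    · exact absurd hc hCne
    · have hxlspos : 0 < xls := by rw [hxls]; exact div_pos hc hA
      have : s = 1 := by rw [hsdef]; exact Real.sign_of_pos hxlspos
      rw [this]; constructor
      · norm_num
      · rw [abs_of_pos hc]; ring
  -- norm2 as sqrt of quadratic
  have hq : ∀ x : ℝ, norm2 (x • a - b) = Real.sqrt (A*x^2 - 2*C*x + B) := by
    intro x
    unfold norm2
    congr 1
    have hterm : ∀ k : Fin m, (x • a - b) k ^ 2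
        = x^2 * a k ^2 - 2*x*(a k * b k) + b k ^2 := by
      intro k
      simp only [Pi.sub_apply, Pi.smul_apply, smul_eq_mul]
      ring
    calc ∑ k, (x • a - b) k ^ 2
        = ∑ k, (x^2 * a k ^2 - 2*x*(a k * b k) + b k ^2) :=
          Finset.sum_congr rfl (fun k _ => hterm k)
      _ = x^2 * (∑ k, a k ^2) - 2*x*(∑ k, a k * b k) + ∑ k, b k ^2 := by
          rw [Finset.sum_add_distrib, Finset.sum_sub_distrib, ← Finset.mul_sum, ← Finset.mul_sum]
      _ = A*x^2 - 2*C*x + B := by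
          have hds : (∑ k, a k * b k) = C := by rw [hCdef]; rfl
          rw [hds, ← hAsum, ← hBsum]; ring
  have hxs' : xstar = C/A - s*(lam/A)*Real.sqrt ((A*B - C^2)/(A - lam^2)) := by
    rw [hxstar, hxls]
  have key := fun x : ℝ => sqrtlasso_core A B C lam s
    (Real.sqrt ((A*B - C^2)/(A - lam^2))) xstar x hlam hA hB hCS hC
    hsfacts.1 hsfacts.2 rfl hxs'
  constructor
  · intro x
    rw [hq x, hq xstar]
    exact (key x).1
  · intro x hmin
    by_contra hne
    have h1 := (key x).2 hne
    have h2 := hmin xstar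
    rw [hq x, hq xstar] at h2
    linarith
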